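/- For every N ≥ 1, t > 0 and x ∈ W_N^A, the Vandermonde harmonic transform conserves total mass: ∫_{W_N^A} h_N(y) · det_{1≤i,j≤N}[p_t(y_i|x_j)] dy = h_N(x). Equivalently, the noncolliding Brownian motion transition density p_t^N(y|x) = (h_N(y)/h_N(x)) det_{1≤i,j≤N}[p_t(y_i|x_j)] satisfies ∫_{W_N^A} p_t^N(y|x) dy = 1. -/

import Mathlib

open MeasureTheory

/-- The one-dimensional Gaussian heat kernel `p_t(b|a)`. -/
noncomputable def heatKer (t b a : ℝ) : ℝ :=
  (1 / Real.sqrt (2 * Real.pi * t)) * Real.exp (-(a - b) ^ 2 / (2 * t))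

/-- The product of differences `h_N(x) = ∏_{1 ≤ i < j ≤ N} (x_j − x_i)`. -/
noncomputable def prodDiff (N : ℕ) (x : Fin N → ℝ) : ℝ :=
  ∏ i : Fin N, ∏ j ∈ Finset.Ioi i, (x j - x i)

open Real

theorem Equiv.Perm.inv_apply_self {α : Type*} (f : Equiv.Perm α) (x : α) : f⁻¹ (f x) = x :=
  Equiv.Perm.inv_eq_iff_eq.mpr rfl

theorem Equiv.Perm.apply_inv_self {α : Type*} (f : Equiv.Perm α) (x : α) : f (f⁻¹ x) = x :=
  (Equiv.eq_symm_apply f).mp rfl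

lemma pow_mul_exp_integrable {b : ℝ} (hb : 0 < b) (k : ℕ) :
    Integrable (fun x : ℝ => x ^ k * Real.exp (-b * x ^ 2)) := by
  have key : ∀ x : ℝ, ‖x ^ k * Real.exp (-b * x ^ 2)‖
      ≤ Real.exp (-b * x ^ 2) + ((k.factorial : ℝ) * (2/b) ^ k) * Real.exp (-(b/2) * x ^ 2) := by
    intro x
    have hexp : (0:ℝ) < Real.exp (-b * x ^ 2) := Real.exp_pos _
    rw [norm_mul, norm_pow, Real.norm_eq_abs, Real.norm_eq_abs, Real.abs_exp]
    have habs : |x| ^ k ≤ 1 + (x ^ 2) ^ k := by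
      rcases le_total |x| 1 with h | h
      · have : |x| ^ k ≤ 1 := pow_le_one₀ (abs_nonneg x) h
        nlinarith [pow_nonneg (sq_nonneg x) k]
      · have h1 : |x| ^ k ≤ (|x| ^ 2) ^ k := by
          rw [← pow_mul]
          exact pow_le_pow_right₀ h (Nat.le_mul_of_pos_left k (by norm_num))
        rw [sq_abs] at h1
        nlinarith
    have hkey : (x ^ 2) ^ k * Real.exp (-b * x ^ 2)
        ≤ ((k.factorial : ℝ) * (2/b) ^ k) * Real.exp (-(b/2) * x ^ 2) := by
      have hu : (0:ℝ) ≤ (b/2) * x ^ 2 := by positivity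
      have h1 : ((b/2) * x ^ 2) ^ k / (k.factorial : ℝ) ≤ Real.exp ((b/2) * x ^ 2) := by
        calc ((b/2) * x ^ 2) ^ k / (k.factorial : ℝ)
            ≤ ∑ i ∈ Finset.range (k+1), ((b/2) * x ^ 2) ^ i / (i.factorial : ℝ) := by
              exact Finset.single_le_sum (f := fun i => ((b/2) * x ^ 2) ^ i / (i.factorial : ℝ))
                (fun i _ => by positivity) (Finset.self_mem_range_succ k)
          _ ≤ Real.exp ((b/2) * x ^ 2) := Real.sum_le_exp_of_nonneg hu _
    -- (x²)^k ≤ k! (2/b)^k exp((b/2)x²)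
      have h2 : (x ^ 2) ^ k ≤ (k.factorial : ℝ) * (2/b) ^ k * Real.exp ((b/2) * x ^ 2) := by
        have hfac : (0:ℝ) < (k.factorial : ℝ) := by positivity
        rw [div_le_iff₀ hfac] at h1
        rw [mul_pow] at h1
        have hbk : (0:ℝ) < (b/2) ^ k := by positivity
        calc (x ^ 2) ^ k = ((b/2) ^ k * (x ^ 2) ^ k) * (2/b) ^ k := by
              field_simp
              rw [mul_assoc, ← mul_pow, div_mul_div_comm, mul_comm b 2,
                div_self (mul_pos two_pos hb).ne', one_pow, mul_one]
          _ ≤ Real.exp ((b/2) * x ^ 2) * (k.factorial : ℝ) * (2/b) ^ k := by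
              have : (0:ℝ) ≤ (2/b) ^ k := by positivity
              nlinarith
          _ = (k.factorial : ℝ) * (2/b) ^ k * Real.exp ((b/2) * x ^ 2) := by ring
      calc (x ^ 2) ^ k * Real.exp (-b * x ^ 2)
          ≤ ((k.factorial : ℝ) * (2/b) ^ k * Real.exp ((b/2) * x ^ 2)) * Real.exp (-b * x ^ 2) := by
            nlinarith [Real.exp_pos (-b * x ^ 2)]
        _ = ((k.factorial : ℝ) * (2/b) ^ k) * Real.exp (-(b/2) * x ^ 2) := by
            rw [mul_assoc, mul_assoc, ← Real.exp_add]; ring_nf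
    nlinarith [pow_nonneg (abs_nonneg x) k, mul_le_mul_of_nonneg_right habs hexp.le]
  apply Integrable.mono'
    ((integrable_exp_neg_mul_sq hb).add
      (((integrable_exp_neg_mul_sq (by positivity : (0:ℝ) < b/2))).const_mul _))
  · exact ((continuous_pow k).mul (Real.continuous_exp.comp (by fun_prop))).aestronglyMeasurable
  · exact Filter.Eventually.of_forall key

lemma heatKer_eq {t : ℝ} (ht : 0 < t) (y a : ℝ) :
    heatKer t y a = (1 / Real.sqrt (2 * Real.pi * t)) *
      Real.exp (-(1/(2*t)) * (y - a) ^ 2) := by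
  unfold heatKer
  have : -(a - y) ^ 2 / (2 * t) = -(1/(2*t)) * (y - a) ^ 2 := by
    field_simp; ring
  rw [this]

lemma integrable_pow_heat {t : ℝ} (ht : 0 < t) (k : ℕ) (a : ℝ) :
    Integrable (fun y : ℝ => y ^ k * heatKer t y a) := by
  have hb : (0:ℝ) < 1/(2*t) := by positivity
  have hg : Integrable (fun u : ℝ => (u + a) ^ k * heatKer t (u + a) a) := by
    have heq : (fun u : ℝ => (u + a) ^ k * heatKer t (u + a) a)
        = fun u : ℝ => ∑ m ∈ Finset.range (k+1),
            (u ^ m * Real.exp (-(1/(2*t)) * u ^ 2)) *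
              (a ^ (k - m) * (k.choose m : ℝ) * (1 / Real.sqrt (2 * Real.pi * t))) := by
      funext u
      rw [heatKer_eq ht (u+a) a, add_sub_cancel_right, add_pow, Finset.sum_mul]
      apply Finset.sum_congr rfl; intro m hm; ring
    rw [heq]
    exact integrable_finset_sum _ fun m _ => (pow_mul_exp_integrable hb m).mul_const _
  have hemb := ((measurePreserving_add_right (volume : Measure ℝ) a).integrable_comp_emb
    (measurableEmbedding_addRight a) (g := fun y : ℝ => y ^ k * heatKer t y a))
  rw [← hemb]
  exact hg

lemma integral_heatKer {t : ℝ} (ht : 0 < t) (a : ℝ) :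
    ∫ y : ℝ, heatKer t y a = 1 := by
  have hb : (0:ℝ) < 1/(2*t) := by positivity
  have h1 : ∫ y : ℝ, heatKer t y a
      = ∫ u : ℝ, heatKer t (u + a) a := (integral_add_right_eq_self _ a).symm
  rw [h1]
  have h2 : (fun u : ℝ => heatKer t (u + a) a)
      = fun u : ℝ => (1 / Real.sqrt (2 * Real.pi * t)) * Real.exp (-(1/(2*t)) * u ^ 2) := by
    funext u; rw [heatKer_eq ht, add_sub_cancel_right]
  rw [h2, MeasureTheory.integral_const_mul, integral_gaussian]
  rw [one_div, one_div]
  have : Real.pi / (2*t)⁻¹ = 2 * Real.pi * t := by field_simp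
  rw [this, inv_mul_cancel₀]
  exact Real.sqrt_ne_zero'.mpr (by positivity)

/-- moments of the centered heat kernel -/
noncomputable def heatMoment (t : ℝ) (m : ℕ) : ℝ := ∫ u : ℝ, u ^ m * heatKer t u 0

lemma heatMoment_zero {t : ℝ} (ht : 0 < t) : heatMoment t 0 = 1 := by
  unfold heatMoment
  simp only [pow_zero, one_mul]
  exact integral_heatKer ht 0

lemma integral_pow_heat {t : ℝ} (ht : 0 < t) (k : ℕ) (a : ℝ) :
    ∫ y : ℝ, y ^ k * heatKer t y a
      = ∑ m ∈ Finset.range (k+1), heatMoment t m * ((k.choose m : ℝ) * a ^ (k - m)) := by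
  have h1 : ∫ y : ℝ, y ^ k * heatKer t y a
      = ∫ u : ℝ, (u + a) ^ k * heatKer t (u + a) a :=
    (integral_add_right_eq_self (fun y : ℝ => y ^ k * heatKer t y a) a).symm
  have hker : ∀ u : ℝ, heatKer t (u + a) a = heatKer t u 0 := by
    intro u; unfold heatKer; congr 2; ring
  have h2 : (fun u : ℝ => (u + a) ^ k * heatKer t (u + a) a)
      = fun u : ℝ => ∑ m ∈ Finset.range (k+1),
          (u ^ m * heatKer t u 0) * ((k.choose m : ℝ) * a ^ (k - m)) := by
    funext u
    rw [hker u, add_pow, Finset.sum_mul]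
    apply Finset.sum_congr rfl; intro m hm; ring
  rw [h1, h2, integral_finset_sum]
  · apply Finset.sum_congr rfl; intro m hm
    rw [integral_mul_const]
    rfl
  · exact fun m _ => (integrable_pow_heat ht m 0).mul_const _

open Polynomial in
noncomputable def heatPoly (t : ℝ) (k : ℕ) : Polynomial ℝ :=
  ∑ m ∈ Finset.range (k+1), C (heatMoment t m * (k.choose m : ℝ)) * X ^ (k - m)

open Polynomial in
lemma heatPoly_eq {t : ℝ} (ht : 0 < t) (k : ℕ) :
    heatPoly t k = X ^ k +
      ∑ m ∈ Finset.Ico 1 (k+1), C (heatMoment t m * (k.choose m : ℝ)) * X ^ (k - m) := by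
  unfold heatPoly
  rw [Finset.range_eq_Ico, Finset.sum_eq_sum_Ico_succ_bot (by omega)]
  simp [heatMoment_zero ht]

open Polynomial in
lemma heatPoly_low_degree {t : ℝ} (k : ℕ) :
    degree (∑ m ∈ Finset.Ico 1 (k+1), C (heatMoment t m * (k.choose m : ℝ)) * X ^ (k - m))
      < (k : ℕ) := by
  apply lt_of_le_of_lt (Polynomial.degree_sum_le _ _)
  rw [Finset.sup_lt_iff (by exact_mod_cast WithBot.bot_lt_coe k)]
  intro m hm
  rw [Finset.mem_Ico] at hm
  apply lt_of_le_of_lt (Polynomial.degree_C_mul_X_pow_le _ _)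
  exact_mod_cast Nat.sub_lt (by omega) (by omega)

open Polynomial in
lemma heatPoly_monic {t : ℝ} (ht : 0 < t) (k : ℕ) : Monic (heatPoly t k) := by
  rw [heatPoly_eq ht k]
  refine (monic_X_pow k).add_of_left ?_
  rw [Polynomial.degree_X_pow]
  exact heatPoly_low_degree k

open Polynomial in
lemma heatPoly_natDegree {t : ℝ} (ht : 0 < t) (k : ℕ) : natDegree (heatPoly t k) = k := by
  have hdeg : degree (heatPoly t k) = k := by
    rw [heatPoly_eq ht k]
    rw [degree_add_eq_left_of_degree_lt]
    · exact degree_X_pow k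
    · rw [degree_X_pow]; exact heatPoly_low_degree k
  exact natDegree_eq_of_degree_eq_some hdeg

open Polynomial in
lemma heatPoly_eval {t : ℝ} (ht : 0 < t) (k : ℕ) (a : ℝ) :
    (heatPoly t k).eval a = ∫ y : ℝ, y ^ k * heatKer t y a := by
  rw [integral_pow_heat ht k a]
  unfold heatPoly
  rw [Polynomial.eval_finset_sum]
  apply Finset.sum_congr rfl
  intro m hm
  simp [mul_assoc]

lemma det_heat_moments {t : ℝ} (ht : 0 < t) {N : ℕ} (x : Fin N → ℝ) :
    Matrix.det (Matrix.of fun i j : Fin N => ∫ y : ℝ, y ^ (i:ℕ) * heatKer t y (x j))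
      = ∏ i : Fin N, ∏ j ∈ Finset.Ioi i, (x j - x i) := by
  have h : (Matrix.of fun i j : Fin N => ∫ y : ℝ, y ^ (i:ℕ) * heatKer t y (x j))
      = (Matrix.of fun i j : Fin N => (heatPoly t (j:ℕ)).eval (x i)).transpose := by
    ext i j
    rw [Matrix.transpose_apply, Matrix.of_apply, Matrix.of_apply, heatPoly_eval ht]
  rw [h, Matrix.det_transpose,
    ← Matrix.det_eval_matrixOfPolynomials_eq_det_vandermonde x (fun j => heatPoly t (j:ℕ))
      (fun j => heatPoly_natDegree ht _) (fun j => heatPoly_monic ht _),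
    Matrix.det_vandermonde]

open Equiv in
lemma expand_F {N : ℕ} (t : ℝ) (x : Fin N → ℝ) (y : Fin N → ℝ) :
    prodDiff N y * Matrix.det (Matrix.of fun i j => heatKer t (y i) (x j))
      = ∑ τ : Perm (Fin N), ∑ σ : Perm (Fin N),
          (((Perm.sign τ : ℤ) : ℝ) * ((Perm.sign σ : ℤ) : ℝ)) *
            ∏ j : Fin N, ((y j) ^ ((τ⁻¹ j : Fin N) : ℕ) * heatKer t (y j) (x (σ⁻¹ j))) := by
  have hV : prodDiff N y = Matrix.det (Matrix.vandermonde y) := by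
    rw [Matrix.det_vandermonde]; rfl
  rw [hV, Matrix.det_apply', Matrix.det_apply', Finset.sum_mul_sum]
  apply Finset.sum_congr rfl; intro τ _
  apply Finset.sum_congr rfl; intro σ _
  have hP : ∏ i : Fin N, Matrix.vandermonde y (τ i) i
      = ∏ j : Fin N, (y j) ^ ((τ⁻¹ j : Fin N) : ℕ) := by
    rw [← Equiv.prod_comp τ (fun j => (y j) ^ ((τ⁻¹ j : Fin N) : ℕ))]
    apply Finset.prod_congr rfl; intro i _
    rw [Matrix.vandermonde_apply, Perm.inv_apply_self]
  have hR : ∏ i : Fin N, Matrix.of (fun i j => heatKer t (y i) (x j)) (σ i) i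
      = ∏ j : Fin N, heatKer t (y j) (x (σ⁻¹ j)) := by
    rw [← Equiv.prod_comp σ (fun j => heatKer t (y j) (x (σ⁻¹ j)))]
    apply Finset.prod_congr rfl; intro i _
    rw [Perm.inv_apply_self]; rfl
  rw [hP, hR, Finset.prod_mul_distrib]
  ring

lemma integrable_F {N : ℕ} {t : ℝ} (ht : 0 < t) (x : Fin N → ℝ) :
    Integrable (fun y : Fin N → ℝ =>
      prodDiff N y * Matrix.det (Matrix.of fun i j => heatKer t (y i) (x j))) := by
  have heq : (fun y : Fin N → ℝ =>
      prodDiff N y * Matrix.det (Matrix.of fun i j => heatKer t (y i) (x j)))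
      = fun y => ∑ τ : Equiv.Perm (Fin N), ∑ σ : Equiv.Perm (Fin N),
          (((Equiv.Perm.sign τ : ℤ) : ℝ) * ((Equiv.Perm.sign σ : ℤ) : ℝ)) *
            ∏ j : Fin N, ((y j) ^ ((τ⁻¹ j : Fin N) : ℕ) * heatKer t (y j) (x (σ⁻¹ j))) := by
    funext y; exact expand_F t x y
  rw [heq]
  apply integrable_finset_sum; intro τ _
  apply integrable_finset_sum; intro σ _
  exact (Integrable.fintype_prod
    (fun j => integrable_pow_heat ht ((τ⁻¹ j : Fin N) : ℕ) (x (σ⁻¹ j)))).const_mul _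

set_option maxHeartbeats 1000000 in
open Equiv in
lemma integral_F {N : ℕ} {t : ℝ} (ht : 0 < t) (x : Fin N → ℝ) :
    ∫ y : Fin N → ℝ,
      prodDiff N y * Matrix.det (Matrix.of fun i j => heatKer t (y i) (x j))
      = (N.factorial : ℝ) * prodDiff N x := by
  set D : Matrix (Fin N) (Fin N) ℝ :=
    Matrix.of (fun i j : Fin N => ∫ u : ℝ, u ^ (i : ℕ) * heatKer t u (x j)) with hD
  have hint : ∀ τ σ : Perm (Fin N), Integrable (fun y : Fin N → ℝ =>
      ∏ j : Fin N, ((y j) ^ ((τ⁻¹ j : Fin N) : ℕ) * heatKer t (y j) (x (σ⁻¹ j)))) :=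
    fun τ σ => Integrable.fintype_prod
      (fun j => integrable_pow_heat ht ((τ⁻¹ j : Fin N) : ℕ) (x (σ⁻¹ j)))
  have h1 : ∫ y : Fin N → ℝ,
      prodDiff N y * Matrix.det (Matrix.of fun i j => heatKer t (y i) (x j))
      = ∑ τ : Perm (Fin N), ∑ σ : Perm (Fin N),
          (((Perm.sign τ : ℤ) : ℝ) * ((Perm.sign σ : ℤ) : ℝ)) *
            ∏ j : Fin N, D (τ⁻¹ j) (σ⁻¹ j) := by
    rw [integral_congr_ae (Filter.Eventually.of_forall (expand_F t x))]
    rw [integral_finset_sum _ (fun τ _ => integrable_finset_sum _ (fun σ _ =>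
      (hint τ σ).const_mul _))]
    apply Finset.sum_congr rfl; intro τ _
    rw [integral_finset_sum _ (fun σ _ => (hint τ σ).const_mul _)]
    apply Finset.sum_congr rfl; intro σ _
    rw [MeasureTheory.integral_const_mul, MeasureTheory.integral_fintype_prod_volume_eq_prod (ι := Fin N)
      (fun j u => u ^ ((τ⁻¹ j : Fin N) : ℕ) * heatKer t u (x (σ⁻¹ j)))]
    rfl
  rw [h1]
  -- reindex the double sum
  have h2 : ∀ τ σ : Perm (Fin N),
      ∏ j : Fin N, D (τ⁻¹ j) (σ⁻¹ j) = ∏ i : Fin N, D ((τ⁻¹ * σ) i) i := by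
    intro τ σ
    rw [← Equiv.prod_comp σ (fun j => D (τ⁻¹ j) (σ⁻¹ j))]
    apply Finset.prod_congr rfl; intro i _
    rw [Perm.inv_apply_self, Perm.mul_apply]
  have h3 : ∀ τ : Perm (Fin N),
      (∑ σ : Perm (Fin N), (((Perm.sign τ : ℤ) : ℝ) * ((Perm.sign σ : ℤ) : ℝ)) *
        ∏ j : Fin N, D (τ⁻¹ j) (σ⁻¹ j)) = Matrix.det D := by
    intro τ
    rw [← Equiv.sum_comp (Equiv.mulLeft τ) (fun σ => (((Perm.sign τ : ℤ) : ℝ) *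
      ((Perm.sign σ : ℤ) : ℝ)) * ∏ j : Fin N, D (τ⁻¹ j) (σ⁻¹ j))]
    rw [Matrix.det_apply']
    apply Finset.sum_congr rfl; intro ρ _
    simp only [Equiv.coe_mulLeft]
    rw [h2 τ (τ * ρ)]
    have hperm : τ⁻¹ * (τ * ρ) = ρ := by group
    rw [hperm]
    have hsign : ((Perm.sign τ : ℤ) : ℝ) * ((Perm.sign (τ * ρ) : ℤ) : ℝ)
        = ((Perm.sign ρ : ℤ) : ℝ) := by
      rw [Equiv.Perm.sign_mul]
      push_cast
      rcases Int.units_eq_one_or (Perm.sign τ) with h | h <;> rcases Int.units_eq_one_or (Perm.sign ρ) with h' | h' <;>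
        simp [h, h']
    rw [hsign]
  calc ∑ τ : Perm (Fin N), ∑ σ : Perm (Fin N),
        (((Perm.sign τ : ℤ) : ℝ) * ((Perm.sign σ : ℤ) : ℝ)) *
          ∏ j : Fin N, D (τ⁻¹ j) (σ⁻¹ j)
      = ∑ τ : Perm (Fin N), Matrix.det D := Finset.sum_congr rfl (fun τ _ => h3 τ)
    _ = (N.factorial : ℝ) * prodDiff N x := by
        rw [Finset.sum_const, Finset.card_univ, Fintype.card_perm, Fintype.card_fin]
        rw [nsmul_eq_mul]
        congr 1
        rw [hD, det_heat_moments ht x]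
        rfl

open Equiv in
lemma F_perm {N : ℕ} (t : ℝ) (x : Fin N → ℝ) (g : Perm (Fin N)) (y : Fin N → ℝ) :
    prodDiff N (fun i => y (g i)) *
        Matrix.det (Matrix.of fun i j => heatKer t (y (g i)) (x j))
      = prodDiff N y * Matrix.det (Matrix.of fun i j => heatKer t (y i) (x j)) := by
  have hV : ∀ z : Fin N → ℝ, prodDiff N z = Matrix.det (Matrix.vandermonde z) := by
    intro z; rw [Matrix.det_vandermonde]; rfl
  have hVsub : Matrix.vandermonde (fun i => y (g i))
      = (Matrix.vandermonde y).submatrix g id := by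
    ext i j; rfl
  have hHsub : (Matrix.of fun i j => heatKer t (y (g i)) (x j))
      = (Matrix.of fun i j => heatKer t (y i) (x j)).submatrix g id := by
    ext i j; rfl
  rw [hV, hV, hVsub, hHsub, Matrix.det_permute, Matrix.det_permute]
  have hs : ((Perm.sign g : ℤ) : ℝ) * ((Perm.sign g : ℤ) : ℝ) = 1 := by
    rcases Int.units_eq_one_or (Perm.sign g) with h | h <;> simp [h]
  calc ((Perm.sign g : ℤ) : ℝ) * (Matrix.vandermonde y).det *
        (((Perm.sign g : ℤ) : ℝ) * (Matrix.of fun i j => heatKer t (y i) (x j)).det)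
      = (((Perm.sign g : ℤ) : ℝ) * ((Perm.sign g : ℤ) : ℝ)) * ((Matrix.vandermonde y).det *
        (Matrix.of fun i j => heatKer t (y i) (x j)).det) := by ring
    _ = (Matrix.vandermonde y).det * (Matrix.of fun i j => heatKer t (y i) (x j)).det := by
        rw [hs, one_mul]

lemma measurableSet_S {N : ℕ} (σ : Equiv.Perm (Fin N)) :
    MeasurableSet {y : Fin N → ℝ | StrictMono (y ∘ σ)} := by
  have : {y : Fin N → ℝ | StrictMono (y ∘ σ)}
      = ⋂ i : Fin N, ⋂ j : Fin N, {y : Fin N → ℝ | i < j → y (σ i) < y (σ j)} := by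
    ext y
    simp only [Set.mem_setOf_eq, Set.mem_iInter]
    constructor
    · intro h i j hij; exact h hij
    · intro h a b hab; exact h a b hab
  rw [this]
  refine MeasurableSet.iInter fun i => MeasurableSet.iInter fun j => ?_
  by_cases hij : i < j
  · simp only [hij, forall_true_left]
    exact measurableSet_lt (measurable_pi_apply _) (measurable_pi_apply _)
  · simp only [hij, false_implies]
    exact MeasurableSet.univ.congr (by ext y; simp [hij])

lemma null_noninjective {N : ℕ} :
    volume {y : Fin N → ℝ | ¬ Function.Injective y} = 0 := by
  have hsub : {y : Fin N → ℝ | ¬ Function.Injective y}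
      ⊆ ⋃ i : Fin N, ⋃ j : Fin N, ⋃ (_ : i ≠ j), {y : Fin N → ℝ | y i = y j} := by
    intro y hy
    simp only [Set.mem_setOf_eq, Function.Injective, not_forall] at hy
    obtain ⟨i, j, hval, hne⟩ := hy
    simp only [Set.mem_iUnion]
    exact ⟨i, j, hne, hval⟩
  refine measure_mono_null hsub ?_
  refine measure_iUnion_null fun i => measure_iUnion_null fun j => measure_iUnion_null fun hij => ?_
  set φ : (Fin N → ℝ) →ₗ[ℝ] ℝ :=
    (LinearMap.proj i : (Fin N → ℝ) →ₗ[ℝ] ℝ) - LinearMap.proj j with hφ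
  have hset : {y : Fin N → ℝ | y i = y j} = (LinearMap.ker φ : Set (Fin N → ℝ)) := by
    ext y; simp [hφ, sub_eq_zero, LinearMap.mem_ker]
  rw [hset]
  apply Measure.addHaar_submodule
  intro htop
  have hm : Pi.single i (1:ℝ) ∈ LinearMap.ker φ := htop ▸ Submodule.mem_top
  rw [LinearMap.mem_ker, hφ] at hm
  simp only [LinearMap.sub_apply, LinearMap.proj_apply] at hm
  rw [Pi.single_eq_same, Pi.single_eq_of_ne (Ne.symm hij)] at hm
  norm_num at hm

set_option maxHeartbeats 1000000 in
/-- For every `N ≥ 1`, `t > 0` and `x` in the Weyl chamber `W_N^A`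
(`x_1 < ⋯ < x_N`), the Vandermonde harmonic transform conserves total mass:
`∫_{W_N^A} h_N(y) det_{1≤i,j≤N}[p_t(y_i|x_j)] dy = h_N(x)`. -/
theorem statement_11 (N : ℕ) (hN : 1 ≤ N) (t : ℝ) (ht : 0 < t)
    (x : Fin N → ℝ) (hx : StrictMono x) :
    ∫ y in {y : Fin N → ℝ | StrictMono y},
        prodDiff N y * Matrix.det (Matrix.of fun i j => heatKer t (y i) (x j))
      = prodDiff N x := by
  classical
  set F : (Fin N → ℝ) → ℝ := fun y =>
    prodDiff N y * Matrix.det (Matrix.of fun i j => heatKer t (y i) (x j)) with hF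
  set S : Equiv.Perm (Fin N) → Set (Fin N → ℝ) :=
    fun σ => {y : Fin N → ℝ | StrictMono (y ∘ σ)} with hS
  have hW : {y : Fin N → ℝ | StrictMono y} = S 1 := by
    ext y; simp [hS, Function.comp_def]
  -- ae covering
  have hcov : ((⋃ σ ∈ (Finset.univ : Finset (Equiv.Perm (Fin N))), S σ) : Set (Fin N → ℝ))
      =ᵐ[volume] Set.univ := by
    rw [Filter.eventuallyEq_set]
    have hsub : (Set.univ \ ⋃ σ ∈ (Finset.univ : Finset (Equiv.Perm (Fin N))), S σ)
        ⊆ {y : Fin N → ℝ | ¬ Function.Injective y} := by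
      intro y hy
      simp only [Set.mem_diff, Set.mem_iUnion, not_exists] at hy
      by_contra hinj
      simp only [Set.mem_setOf_eq, not_not] at hinj
      apply hy.2 (Tuple.sort y) (Finset.mem_univ _)
      have hmono : Monotone (y ∘ Tuple.sort y) := Tuple.monotone_sort y
      have hinj2 : Function.Injective (y ∘ Tuple.sort y) :=
        hinj.comp (Equiv.injective _)
      exact hmono.strictMono_of_injective hinj2
    have h0 : volume (Set.univ \ ⋃ σ ∈ (Finset.univ : Finset (Equiv.Perm (Fin N))), S σ) = 0 :=
      measure_mono_null hsub null_noninjective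
    filter_upwards [MeasureTheory.measure_eq_zero_iff_ae_notMem.mp h0] with y hy
    simp only [Set.mem_diff, Set.mem_univ, true_and, not_not] at hy
    simp only [Set.mem_univ, iff_true]
    exact hy
  -- disjointness
  have hdisj : Set.Pairwise (↑(Finset.univ : Finset (Equiv.Perm (Fin N)))) (Function.onFun Disjoint S) := by
    intro σ _ τ _ hστ
    rw [Function.onFun, Set.disjoint_left]
    intro y hyσ hyτ
    have hσ : StrictMono (y ∘ σ) := hyσ
    have hτ : StrictMono (y ∘ τ) := hyτ
    have hinj : Function.Injective y := by
      have h1 : Function.Injective (y ∘ σ) := hσ.injective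
      intro a b hab
      have := h1 (show (y ∘ σ) (σ⁻¹ a) = (y ∘ σ) (σ⁻¹ b) by
        simp only [Function.comp_apply, Equiv.Perm.apply_inv_self]; exact hab)
      have h2 : σ⁻¹ a = σ⁻¹ b := this
      simpa using congrArg σ h2
    have heq : y ∘ σ = y ∘ τ := Tuple.unique_monotone hσ.monotone hτ.monotone
    exact hστ (Equiv.ext fun i => hinj (congrFun heq i))
  -- splitting the integral
  have hsplit : ∫ y : Fin N → ℝ, F y
      = ∑ σ : Equiv.Perm (Fin N), ∫ y in S σ, F y := by
    calc ∫ y : Fin N → ℝ, F y = ∫ y in Set.univ, F y := by rw [setIntegral_univ]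
      _ = ∫ y in (⋃ σ ∈ (Finset.univ : Finset (Equiv.Perm (Fin N))), S σ), F y :=
          (setIntegral_congr_set hcov).symm
      _ = ∑ σ : Equiv.Perm (Fin N), ∫ y in S σ, F y :=
          integral_biUnion_finset Finset.univ (fun σ _ => measurableSet_S σ) hdisj
            (fun σ _ => (integrable_F ht x).integrableOn)
  -- each chamber integral equals the Weyl chamber integral
  have hcham : ∀ σ : Equiv.Perm (Fin N), ∫ y in S σ, F y = ∫ y in S 1, F y := by
    intro σ
    set T := MeasurableEquiv.piCongrLeft (fun _ : Fin N => ℝ) σ with hT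
    have hTapp : ∀ (y : Fin N → ℝ) (i : Fin N), T y (σ i) = y i := by
      intro y i
      rw [hT, MeasurableEquiv.coe_piCongrLeft, Equiv.piCongrLeft_apply_apply]
    have hTy : ∀ y : Fin N → ℝ, T y = fun i => y (σ⁻¹ i) := by
      intro y; funext i
      conv_lhs => rw [← Equiv.Perm.apply_inv_self σ i]
      rw [hTapp y (σ⁻¹ i)]
    have hpre : T ⁻¹' (S σ) = S 1 := by
      ext y
      simp only [Set.mem_preimage, hS, Set.mem_setOf_eq]
      have : (T y) ∘ σ = y := funext fun i => hTapp y i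
      rw [this]
      simp [Function.comp_def]
    have hmp := (volume_measurePreserving_piCongrLeft (fun _ : Fin N => ℝ) σ)
    have hkey := hmp.setIntegral_preimage_emb T.measurableEmbedding F (S σ)
    calc ∫ y in S σ, F y = ∫ y in T ⁻¹' (S σ), F (T y) := hkey.symm
      _ = ∫ y in S 1, F y := by
          rw [hpre]
          apply setIntegral_congr_fun (measurableSet_S 1)
          intro y _
          change F (T y) = F y
          rw [hTy y]
          simp only [hF]
          exact F_perm t x σ⁻¹ y
  have hsum : ∫ y : Fin N → ℝ, F y = (N.factorial : ℝ) * ∫ y in S 1, F y := by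
    rw [hsplit, Finset.sum_congr rfl (fun σ _ => hcham σ), Finset.sum_const, Finset.card_univ,
      Fintype.card_perm, Fintype.card_fin, nsmul_eq_mul]
  have hfac : (N.factorial : ℝ) ≠ 0 := by
    exact_mod_cast Nat.factorial_ne_zero N
  have hfinal : (N.factorial : ℝ) * ∫ y in S 1, F y = (N.factorial : ℝ) * prodDiff N x := by
    rw [← hsum, integral_F ht x]
  rw [hW]
  exact mul_left_cancel₀ hfac hfinal
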